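/- Let A and B be integers with 1 ≤ B < A, and let P be the generating function of the set of Dyck paths none of whose up-run lengths lies in the arithmetic progression {A·r + B : r ≥ 0}. Then, as formal power series, P = Σ_{0 ≤ k < A, k ≠ B} z^k·P^k + z^A·P^{A+1}. -/

import Mathlib

/-- The height of a path (list of up/down steps, `true` = up = +1, `false` = down = −1)
after its first `k` steps. -/
def heightAt (p : List Bool) (k : ℕ) : ℤ :=
  ((p.take k).count true : ℤ) - ((p.take k).count false : ℤ)

/-- A Dyck path: all partial sums nonnegative and total sum zero. -/
def IsDyck (p : List Bool) : Prop :=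
  (∀ k, 0 ≤ heightAt p k) ∧ heightAt p p.length = 0

/-- A peak at height `h`: an up-step immediately followed by a down-step,
the height after the up-step being `h`. -/
def HasPeakAt (p : List Bool) (h : ℤ) : Prop :=
  ∃ i, p[i]? = some true ∧ p[i+1]? = some false ∧ heightAt p (i+1) = h

/-- A valley at height `h`: a down-step immediately followed by an up-step,
the height after the down-step being `h`. -/
def HasValleyAt (p : List Bool) (h : ℤ) : Prop :=
  ∃ i, p[i]? = some false ∧ p[i+1]? = some true ∧ heightAt p (i+1) = h

/-- `p` has an up-run of length `m`: a maximal block of exactly `m` consecutive up-steps. -/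
def HasUpRun (p : List Bool) (m : ℕ) : Prop :=
  ∃ i, (∀ j, j < m → p[i+j]? = some true) ∧
    (i = 0 ∨ p[i-1]? = some false) ∧
    (p[i+m]? = some false ∨ i + m = p.length)

/-- `p` has a down-run of length `m`: a maximal block of exactly `m` consecutive down-steps. -/
def HasDownRun (p : List Bool) (m : ℕ) : Prop :=
  ∃ i, (∀ j, j < m → p[i+j]? = some false) ∧
    (i = 0 ∨ p[i-1]? = some true) ∧
    (p[i+m]? = some true ∨ i + m = p.length)

/-- Generating function of the set of Dyck paths satisfying `Q`:
the coefficient of `z^n` is the number of such paths of semilength `n`. -/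
noncomputable def genFun (Q : List Bool → Prop) : PowerSeries ℕ :=
  PowerSeries.mk fun n => Set.ncard {p : List Bool | p.length = 2 * n ∧ IsDyck p ∧ Q p}

namespace Stmt9
open List

lemma heightAt_zero (p : List Bool) : heightAt p 0 = 0 := by simp [heightAt]

lemma heightAt_add (p : List Bool) (i j : ℕ) :
    heightAt p (i + j) = heightAt p i + heightAt (p.drop i) j := by
  unfold heightAt
  rw [List.take_add, List.count_append, List.count_append]
  push_cast; ring

lemma heightAt_append (a b : List Bool) (j : ℕ) :
    heightAt (a ++ b) (a.length + j) = heightAt a a.length + heightAt b j := by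
  unfold heightAt
  rw [List.take_append, List.count_append, List.count_append, List.take_length,
    List.take_of_length_le (Nat.le_add_right a.length j), Nat.add_sub_cancel_left]
  push_cast; ring

lemma heightAt_of_le (p : List Bool) {k : ℕ} (h : p.length ≤ k) :
    heightAt p k = heightAt p p.length := by
  unfold heightAt; rw [List.take_of_length_le h, List.take_of_length_le le_rfl]

lemma heightAt_cons_one (b : Bool) (q : List Bool) :
    heightAt (b :: q) 1 = if b then 1 else -1 := by
  cases b <;> simp [heightAt]

lemma heightAt_cons (b : Bool) (q : List Bool) (j : ℕ) :
    heightAt (b :: q) (j + 1) = (if b then 1 else -1) + heightAt q j := by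
  have := heightAt_add (b :: q) 1 j
  rw [add_comm 1 j] at this
  rw [this, heightAt_cons_one]; simp

lemma heightAt_step (p : List Bool) (k : ℕ) (b : Bool) (hb : p[k]? = some b) :
    heightAt p (k + 1) = heightAt p k + (if b then 1 else -1) := by
  have hk : k < p.length := by
    by_contra h
    simp [List.getElem?_eq_none (le_of_not_gt h)] at hb
  rw [heightAt_add]
  have : p.drop k = b :: p.drop (k+1) := by
    rw [List.drop_eq_getElem_cons hk]
    congr 1
    have := List.getElem?_eq_getElem hk
    rw [this] at hb; exact (Option.some_inj.mp hb)
  rw [this, heightAt_cons_one]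

lemma isDyck_nil : IsDyck [] := by constructor <;> simp [heightAt]

/-- gluing lemma -/
lemma isDyck_glue {a b : List Bool} (ha : IsDyck a) (hb : IsDyck b) :
    IsDyck (true :: (a ++ false :: b)) := by
  set p := true :: (a ++ false :: b) with hp
  have len : p.length = a.length + b.length + 2 := by simp [hp]; omega
  have key : ∀ k, heightAt p k =
      if k = 0 then 0
      else if k ≤ a.length + 1 then 1 + heightAt a (k - 1)
      else heightAt b (k - a.length - 2) := by
    intro k
    rcases Nat.eq_zero_or_pos k with h0 | h0
    · simp [h0, heightAt_zero]
    rw [if_neg (by omega)]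
    by_cases hk : k ≤ a.length + 1
    · rw [if_pos hk]
      obtain ⟨j, rfl⟩ : ∃ j, k = j + 1 := ⟨k - 1, by omega⟩
      rw [hp, heightAt_cons]
      have hj : j ≤ a.length := by omega
      have : heightAt (a ++ false :: b) j = heightAt a j := by
        unfold heightAt
        rw [List.take_append_of_le_length hj]
      rw [this]; simp
    · rw [if_neg hk]
      obtain ⟨i, rfl⟩ : ∃ i, k = (a.length + 2) + i := ⟨k - a.length - 2, by omega⟩
      have e2 : heightAt p ((a.length + 2) + i)
          = (if true then (1:ℤ) else -1) + heightAt (a ++ false :: b) (a.length + (i + 1)) := by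
        rw [show (a.length + 2) + i = (a.length + (i+1)) + 1 by omega, hp, heightAt_cons]
      rw [e2, heightAt_append, heightAt_cons, ha.2,
        show (a.length + 2) + i - a.length - 2 = i by omega]
      simp
  constructor
  · intro k
    rw [key k]
    split_ifs with h1 h2
    · exact le_refl 0
    · have := ha.1 (k-1); linarith
    · exact hb.1 _
  · rw [len, key]
    rw [if_neg (by omega), if_neg (by omega)]
    have : a.length + b.length + 2 - a.length - 2 = b.length := by omega
    rw [this]; exact hb.2

lemma heightAt_take (l : List Bool) (m j : ℕ) :
    heightAt (l.take m) j = heightAt l (min j m) := by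
  unfold heightAt; rw [List.take_take]

lemma heightAt_drop (p : List Bool) (i j : ℕ) :
    heightAt (p.drop i) j = heightAt p (i + j) - heightAt p i := by
  rw [heightAt_add]; ring

lemma exists_firstReturn {p : List Bool} (hp : IsDyck p) (hne : p ≠ []) :
    ∃ a b, IsDyck a ∧ IsDyck b ∧ a.length < p.length ∧ p = true :: (a ++ false :: b) := by
  have hn : 0 < p.length := List.length_pos_iff.mpr hne
  have hex : ∃ t, 0 < t ∧ heightAt p t = 0 := ⟨p.length, hn, hp.2⟩
  classical
  have hfr : ∃ t, 0 < t ∧ heightAt p t = 0 ∧ t ≤ p.length ∧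
      ∀ s, 0 < s → s < t → 1 ≤ heightAt p s := by
    refine ⟨Nat.find hex, (Nat.find_spec hex).1, (Nat.find_spec hex).2,
      Nat.find_le ⟨hn, hp.2⟩, ?_⟩
    intro s hs hst
    have h1 : ¬(0 < s ∧ heightAt p s = 0) := Nat.find_min hex hst
    have h2 : heightAt p s ≠ 0 := fun h => h1 ⟨hs, h⟩
    have h3 := hp.1 s
    have : 0 < heightAt p s := lt_of_le_of_ne h3 (Ne.symm h2)
    linarith [Int.add_one_le_iff.mpr this]
  obtain ⟨t, htpos, htzero, htn, hpos⟩ := hfr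
  have hhead : p[0]? = some true := by
    have h0 : 0 < p.length := hn
    obtain ⟨b, hb⟩ : ∃ b, p[0]? = some b := ⟨p[0], List.getElem?_eq_getElem h0⟩
    have hs := heightAt_step p 0 b hb
    rw [heightAt_zero] at hs
    cases b with
    | false =>
      exfalso; have h9 := hp.1 1; rw [hs] at h9; simp at h9
    | true => exact hb
  have ht2 : 2 ≤ t := by
    by_contra h
    push_neg at h
    have ht1' : t = 1 := by omega
    rw [ht1'] at htzero
    have hs := heightAt_step p 0 true hhead
    rw [heightAt_zero, htzero] at hs
    simp at hs
  have hstep := fun (b : Bool) (hb : p[t-1]? = some b) => heightAt_step p (t-1) b hb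
  obtain ⟨bt, hbt⟩ : ∃ b, p[t-1]? = some b := ⟨p[t-1]'(by omega), List.getElem?_eq_getElem (by omega)⟩
  have ht1pos : 1 ≤ heightAt p (t-1) := hpos (t-1) (by omega) (by omega)
  have hlaststep := heightAt_step p (t-1) bt hbt
  rw [show t - 1 + 1 = t by omega, htzero] at hlaststep
  have hbtfalse : bt = false := by
    cases bt with
    | true => exfalso; simp at hlaststep; linarith
    | false => rfl
  subst hbtfalse
  have ht1 : heightAt p (t-1) = 1 := by simp at hlaststep; linarith
  -- destructure p
  obtain ⟨q, rfl⟩ : ∃ q, p = true :: q := by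
    cases p with
    | nil => exact absurd rfl hne
    | cons x q =>
      simp at hhead
      exact ⟨q, by rw [hhead]⟩
  set a : List Bool := q.take (t-2) with hadef
  set b : List Bool := q.drop (t-1) with hbdef
  have hqlen : q.length = (true :: q).length - 1 := by simp
  have hdec : (true :: q) = true :: (a ++ false :: b) := by
    congr 1
    have h1 : q = q.take (t-2) ++ q.drop (t-2) := (List.take_append_drop _ _).symm
    have h2 : t - 2 < q.length := by have h99 := htn; simp only [List.length_cons] at h99; omega
    have h3 : q.drop (t-2) = q[t-2] :: q.drop (t-1) := by
      rw [show t - 1 = (t-2) + 1 by omega]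
      exact List.drop_eq_getElem_cons h2
    have h4 : q[t-2] = false := by
      have : (true :: q)[t-1]? = q[t-2]? := by
        rw [show t - 1 = (t-2) + 1 by omega]
        simp
      rw [this] at hbt
      rw [List.getElem?_eq_getElem h2] at hbt
      exact Option.some_inj.mp hbt
    rw [← h4, ← h3, ← h1]
  -- heights of q
  have hq : ∀ j, heightAt q j = heightAt (true :: q) (1 + j) - 1 := by
    intro j
    have := heightAt_add (true :: q) 1 j
    rw [heightAt_cons_one] at this
    simp only [List.drop_one, List.tail_cons] at this
    rw [this]; simp
  have hda : IsDyck a := by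
    constructor
    · intro j
      rw [hadef, heightAt_take, hq]
      have hlt : 1 + min j (t-2) < t := by omega
      rcases Nat.eq_zero_or_pos (min j (t-2)) with h0 | h0
      · rw [h0]; rw [show 1 + 0 = 1 by rfl]
        have := hpos 1 (by omega) (by omega)
        linarith
      · have := hpos (1 + min j (t-2)) (by omega) hlt
        linarith
    · have hal : a.length = t - 2 := by
        rw [hadef, List.length_take]
        simp at hn ⊢; omega
      rw [hal, hadef, heightAt_take, hq, min_self, show 1 + (t-2) = t - 1 by omega, ht1]
      ring
  have hdb : IsDyck b := by
    have hb : ∀ j, heightAt b j = heightAt (true :: q) (t + j) := by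
      intro j
      rw [hbdef, heightAt_drop, hq, hq, show 1 + (t - 1 + j) = t + j by omega,
        show 1 + (t-1) = t by omega, htzero]
      ring
    constructor
    · intro j; rw [hb]; exact hp.1 _
    · have hbl : b.length = (true :: q).length - t := by
        rw [hbdef, List.length_drop]; simp; omega
      rw [hbl, hb, show t + ((true :: q).length - t) = (true :: q).length by omega]
      exact hp.2
  exact ⟨a, b, hda, hdb, by
    have h5 : a.length = t - 2 := by
      rw [hadef, List.length_take]
      have := htn; simp at this; omega
    have := htn; simp at this ⊢; omega, hdec⟩


/-! ### compose and runs -/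

def compose : List (List Bool) → List Bool
  | [] => []
  | a :: l => false :: (a ++ compose l)

lemma compose_append_single (l : List (List Bool)) (b : List Bool) :
    compose (l ++ [b]) = compose l ++ (false :: b) := by
  induction l with
  | nil => simp [compose]
  | cons a l ih => simp [compose, ih]

lemma compose_shape (l : List (List Bool)) :
    compose l = [] ∨ (compose l)[0]? = some false := by
  cases l <;> simp [compose]

lemma length_compose (l : List (List Bool)) :
    (compose l).length = l.length + (l.map List.length).sum := by
  induction l with
  | nil => simp [compose]
  | cons a l ih => simp [compose, ih]; omega

lemma lt_of_get? {α : Type*} {l : List α} {n : ℕ} {c : α} (h : l[n]? = some c) :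
    n < l.length := by
  by_contra hc
  rw [List.getElem?_eq_none (le_of_not_gt hc)] at h
  simp at h

lemma not_hasUpRun_nil {m : ℕ} (hm : 1 ≤ m) : ¬ HasUpRun [] m := by
  rintro ⟨i, h1, h2, h3⟩
  have := h1 0 hm
  simp at this

lemma hasUpRun_cons_false {b : List Bool} {m : ℕ} (hm : 1 ≤ m) :
    HasUpRun (false :: b) m ↔ HasUpRun b m := by
  constructor
  · rintro ⟨i, h1, h2, h3⟩
    cases i with
    | zero => have := h1 0 hm; simp at this
    | succ i =>
      refine ⟨i, ?_, ?_, ?_⟩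
      · intro j hj
        have := h1 j hj
        rw [show i + 1 + j = (i + j) + 1 by omega, List.getElem?_cons_succ] at this
        exact this
      · rcases h2 with h | h
        · omega
        · cases i with
          | zero => exact Or.inl rfl
          | succ i' =>
            right
            rw [show i' + 1 + 1 - 1 = i' + 1 by omega, List.getElem?_cons_succ] at h
            rw [show i' + 1 - 1 = i' by omega]
            exact h
      · rcases h3 with h | h
        · left
          rw [show i + 1 + m = (i + m) + 1 by omega, List.getElem?_cons_succ] at h
          exact h
        · right; simp at h; omega
  · rintro ⟨i, h1, h2, h3⟩
    refine ⟨i + 1, ?_, ?_, ?_⟩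
    · intro j hj
      rw [show i + 1 + j = (i + j) + 1 by omega, List.getElem?_cons_succ]
      exact h1 j hj
    · rcases h2 with h | h
      · right; rw [h]; simp
      · right
        have hi1 : 1 ≤ i := by
          rcases Nat.eq_zero_or_pos i with h0 | h0
          · exfalso
            have ht := h1 0 hm
            rw [h0] at ht h
            simp only [Nat.add_zero, Nat.zero_sub] at ht h
            rw [ht] at h
            simp at h
          · exact h0
        rw [show i + 1 - 1 = (i - 1) + 1 by omega, List.getElem?_cons_succ]
        exact h
    · rcases h3 with h | h
      · left
        rw [show i + 1 + m = (i + m) + 1 by omega, List.getElem?_cons_succ]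
        exact h
      · right; simp; omega

lemma hasUpRun_append {a b : List Bool} {m : ℕ} (hm : 1 ≤ m)
    (hb : b = [] ∨ b[0]? = some false) :
    HasUpRun (a ++ b) m ↔ HasUpRun a m ∨ HasUpRun b m := by
  constructor
  · rintro ⟨i, h1, h2, h3⟩
    by_cases hi : i < a.length
    · have hcross : i + m ≤ a.length := by
        by_contra hc
        push_neg at hc
        have hj : a.length - i < m := by omega
        have hh := h1 (a.length - i) hj
        rw [show i + (a.length - i) = a.length by omega,
          List.getElem?_append_right (le_refl _)] at hh
        simp at hh
        rcases hb with rfl | hbf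
        · simp at hh
        · rw [hbf] at hh; simp at hh
      left
      refine ⟨i, ?_, ?_, ?_⟩
      · intro j hj
        have := h1 j hj
        rwa [List.getElem?_append_left (by omega)] at this
      · rcases h2 with h | h
        · exact Or.inl h
        · right; rwa [List.getElem?_append_left (by omega)] at h
      · rcases h3 with h | h
        · by_cases he : i + m < a.length
          · left; rwa [List.getElem?_append_left he] at h
          · right; omega
        · right; rw [List.length_append] at h
          rcases hb with rfl | hbf
          · simp at h ⊢; omega
          · have : 0 < b.length := lt_of_get? hbf
            omega
    · push_neg at hi
      right
      refine ⟨i - a.length, ?_, ?_, ?_⟩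
      · intro j hj
        have := h1 j hj
        rw [List.getElem?_append_right (by omega)] at this
        rwa [show i + j - a.length = i - a.length + j by omega] at this
      · by_cases hia : i ≤ a.length
        · left; omega
        · push_neg at hia
          rcases h2 with h | h
          · omega
          · right
            rw [List.getElem?_append_right (by omega)] at h
            rwa [show i - 1 - a.length = i - a.length - 1 by omega] at h
      · rcases h3 with h | h
        · left
          rw [List.getElem?_append_right (by omega)] at h
          rwa [show i + m - a.length = i - a.length + m by omega] at h
        · right; rw [List.length_append] at h; omega
  · rintro (⟨i, h1, h2, h3⟩ | ⟨i, h1, h2, h3⟩)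
    · have him : i + m ≤ a.length := by
        rcases h3 with h | h
        · exact le_of_lt (lt_of_get? h)
        · omega
      refine ⟨i, ?_, ?_, ?_⟩
      · intro j hj
        rw [List.getElem?_append_left (by omega)]
        exact h1 j hj
      · rcases h2 with h | h
        · exact Or.inl h
        · right
          rw [List.getElem?_append_left (lt_of_get? h)]
          exact h
      · rcases h3 with h | h
        · left
          rw [List.getElem?_append_left (lt_of_get? h)]
          exact h
        · rcases hb with rfl | hbf
          · right; simp; omega
          · left
            rw [List.getElem?_append_right (by omega),
              show i + m - a.length = 0 by omega]
            exact hbf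
    · have hb0 : b[0]? = some false := by
        rcases hb with rfl | hbf
        · exfalso; have := h1 0 hm; simp at this
        · exact hbf
      have hi1 : 1 ≤ i := by
        rcases Nat.eq_zero_or_pos i with h0 | h0
        · exfalso; have := h1 0 hm; rw [h0] at this; simp at this
          rw [this] at hb0; simp at hb0
        · exact h0
      refine ⟨a.length + i, ?_, ?_, ?_⟩
      · intro j hj
        rw [show a.length + i + j = a.length + (i + j) by omega,
          List.getElem?_append_right (by omega),
          show a.length + (i + j) - a.length = i + j by omega]
        exact h1 j hj
      · right
        rw [show a.length + i - 1 = a.length + (i - 1) by omega,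
          List.getElem?_append_right (by omega),
          show a.length + (i - 1) - a.length = i - 1 by omega]
        rcases h2 with h | h
        · omega
        · exact h
      · rcases h3 with h | h
        · left
          rw [show a.length + i + m = a.length + (i + m) by omega,
            List.getElem?_append_right (by omega),
            show a.length + (i + m) - a.length = i + m by omega]
          exact h
        · right; rw [List.length_append]; omega

lemma hasUpRun_replicate {k m : ℕ} (hm : 1 ≤ m) :
    HasUpRun (List.replicate k true) m ↔ m = k ∧ 1 ≤ k := by
  constructor
  · rintro ⟨i, h1, h2, h3⟩
    have hi0 : i = 0 := by
      rcases h2 with h | h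
      · exact h
      · exfalso
        have hlt := lt_of_get? h
        rw [List.getElem?_replicate] at h
        rw [if_pos (by simpa using hlt)] at h
        simp at h
    subst hi0
    have h0 := h1 0 hm
    simp only [Nat.add_zero, zero_add] at h0 h3
    have hk : 1 ≤ k := by
      have := lt_of_get? h0; simp at this; omega
    refine ⟨?_, hk⟩
    rcases h3 with h | h
    · exfalso
      rw [List.getElem?_replicate] at h
      by_cases hmk : m < k
      · rw [if_pos hmk] at h; simp at h
      · rw [if_neg hmk] at h; simp at h
    · simpa using h
  · rintro ⟨rfl, hk⟩
    refine ⟨0, ?_, Or.inl rfl, Or.inr (by simp)⟩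
    intro j hj
    rw [List.getElem?_replicate, if_pos (by omega)]

lemma hasUpRun_compose {l : List (List Bool)} {m : ℕ} (hm : 1 ≤ m) :
    HasUpRun (compose l) m ↔ ∃ α ∈ l, HasUpRun α m := by
  induction l with
  | nil => simp [compose, not_hasUpRun_nil hm]
  | cons a l ih =>
    show HasUpRun (false :: (a ++ compose l)) m ↔ _
    rw [hasUpRun_cons_false hm, hasUpRun_append hm (compose_shape l), ih]
    constructor
    · rintro (h | ⟨α, hα, h⟩)
      · exact ⟨a, by simp, h⟩
      · exact ⟨α, by simp [hα], h⟩
    · rintro ⟨α, hα, h⟩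
      rcases List.mem_cons.mp hα with rfl | hα'
      · exact Or.inl h
      · exact Or.inr ⟨α, hα', h⟩

lemma hasUpRun_phi {k m : ℕ} {l : List (List Bool)} (hm : 1 ≤ m) :
    HasUpRun (List.replicate k true ++ compose l) m ↔
      (m = k ∧ 1 ≤ k) ∨ ∃ α ∈ l, HasUpRun α m := by
  rw [hasUpRun_append hm (compose_shape l), hasUpRun_replicate hm, hasUpRun_compose hm]

lemma phi_snoc (l : List (List Bool)) (b : List Bool) :
    List.replicate (l ++ [b]).length true ++ compose (l ++ [b])
      = true :: ((List.replicate l.length true ++ compose l) ++ false :: b) := by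
  rw [compose_append_single]
  simp [List.replicate_succ, List.append_assoc]

lemma isDyck_phi : ∀ (l : List (List Bool)), (∀ α ∈ l, IsDyck α) →
    IsDyck (List.replicate l.length true ++ compose l) := by
  intro l
  induction l using List.reverseRecOn with
  | nil => intro _; simpa [compose] using isDyck_nil
  | append_singleton l b ih =>
    intro h
    have hb : IsDyck b := h b (by simp)
    have hl : ∀ α ∈ l, IsDyck α := fun α hα => h α (by simp [hα])
    rw [phi_snoc]
    exact isDyck_glue (ih hl) hb

lemma exists_decomp : ∀ (n : ℕ) (p : List Bool), p.length = n → IsDyck p →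
    ∃ l : List (List Bool), (∀ α ∈ l, IsDyck α) ∧
      p = List.replicate l.length true ++ compose l := by
  intro n
  induction n using Nat.strong_induction_on with
  | _ n ih =>
    intro p hlen hp
    rcases eq_or_ne p [] with rfl | hne
    · exact ⟨[], by simp, by simp [compose]⟩
    · obtain ⟨a, b, ha, hb, halen, heq⟩ := exists_firstReturn hp hne
      obtain ⟨la, hla, haeq⟩ := ih a.length (by omega) a rfl ha
      refine ⟨la ++ [b], ?_, ?_⟩
      · intro α hα
        rcases List.mem_append.mp hα with h | h
        · exact hla α h
        · simp at h; subst h; exact hb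
      · rw [heq, haeq, phi_snoc]

lemma prefix_dyck_eq_aux {x y u v : List Bool} (hx : IsDyck x) (hy : IsDyck y)
    (hxy : x ++ u = y ++ v) (hu : u = [] ∨ u[0]? = some false)
    (hle : x.length ≤ y.length) : x = y := by
  have hyx : y.take x.length = x := by
    have h1 : (x ++ u).take x.length = x := List.take_left
    rw [hxy, List.take_append_of_le_length hle] at h1
    exact h1
  have hyw : y = x ++ y.drop x.length := by
    conv_lhs => rw [← List.take_append_drop x.length y]
    rw [hyx]
  obtain ⟨w, hyw⟩ : ∃ w, y = x ++ w := ⟨y.drop x.length, hyw⟩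
  rcases eq_or_ne w [] with hwnil | hwne
  · rw [hwnil] at hyw; simpa using hyw.symm
  · exfalso
    have huv : u = w ++ v := by
      rw [hyw, List.append_assoc] at hxy
      exact List.append_cancel_left hxy
    have hw0 : w[0]? = some false := by
      rcases hu with rfl | huf
      · exfalso
        have h9 : w ++ v = [] := huv.symm
        rw [List.append_eq_nil_iff] at h9
        exact hwne h9.1
      · rw [huv, List.getElem?_append_left (List.length_pos_iff.mpr hwne)] at huf
        exact huf
    obtain ⟨w', hw'⟩ : ∃ w', w = false :: w' := by
      cases w with
      | nil => exact absurd rfl hwne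
      | cons c w' =>
        rw [List.getElem?_cons_zero] at hw0
        exact ⟨w', by rw [Option.some_inj.mp hw0]⟩
    have hbad : heightAt y (x.length + 1) = -1 := by
      rw [hyw, hw', heightAt_append, hx.2, heightAt_cons_one]
      simp
    have := hy.1 (x.length + 1)
    rw [hbad] at this
    linarith

lemma compose_inj : ∀ {l l' : List (List Bool)}, (∀ α ∈ l, IsDyck α) →
    (∀ α ∈ l', IsDyck α) → compose l = compose l' → l = l' := by
  intro l
  induction l with
  | nil =>
    intro l' _ _ h
    cases l' with
    | nil => rfl
    | cons a t => simp [compose] at h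
  | cons a t ih =>
    intro l' hl hl' h
    cases l' with
    | nil => simp [compose] at h
    | cons a' t' =>
      have h2 : a ++ compose t = a' ++ compose t' := by
        have hcc : false :: (a ++ compose t) = false :: (a' ++ compose t') := h
        simp only [List.cons.injEq, true_and] at hcc
        exact hcc
      have ha := hl a (by simp)
      have ha' := hl' a' (by simp)
      have haa : a = a' := by
        rcases le_total a.length a'.length with hle | hle
        · exact prefix_dyck_eq_aux ha ha' h2 (compose_shape t) hle
        · exact (prefix_dyck_eq_aux ha' ha h2.symm (compose_shape t') hle).symm
      subst haa
      have h3 : compose t = compose t' := List.append_cancel_left h2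
      rw [ih (fun α hα => hl α (by simp [hα])) (fun α hα => hl' α (by simp [hα])) h3]

lemma takeWhile_phi (k : ℕ) (r : List Bool) (hr : r = [] ∨ r[0]? = some false) :
    (List.replicate k true ++ r).takeWhile id = List.replicate k true := by
  induction k with
  | zero =>
    simp only [List.replicate, List.nil_append]
    rcases hr with rfl | hrf
    · simp
    · cases r with
      | nil => simp
      | cons c r' =>
        simp at hrf
        rw [hrf]
        simp [List.takeWhile]
  | succ k ihk =>
    rw [List.replicate_succ]
    simp only [List.cons_append, List.takeWhile_cons]
    simp [ihk]

lemma phi_inj {l l' : List (List Bool)} (hl : ∀ α ∈ l, IsDyck α) (hl' : ∀ α ∈ l', IsDyck α)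
    (h : List.replicate l.length true ++ compose l
      = List.replicate l'.length true ++ compose l') :
    l = l' := by
  have hk : l.length = l'.length := by
    have h1 := congrArg (fun s => (List.takeWhile id s).length) h
    simp only [takeWhile_phi _ _ (compose_shape l), takeWhile_phi _ _ (compose_shape l'),
      List.length_replicate] at h1
    exact h1
  rw [hk] at h
  exact compose_inj hl hl' (List.append_cancel_left h)


/-! ### Counting -/

noncomputable section
open Classical

def Phi (l : List (List Bool)) : List Bool := List.replicate l.length true ++ compose l

variable (A B : ℕ)

def Avoid (p : List Bool) : Prop := ∀ r : ℕ, ¬ HasUpRun p (A * r + B)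

def Allowed (k : ℕ) : Prop := ∀ r : ℕ, k ≠ A * r + B

lemma avoid_phi (hB : 1 ≤ B) (l : List (List Bool)) :
    Avoid A B (Phi l) ↔ Allowed A B l.length ∧ ∀ α ∈ l, Avoid A B α := by
  constructor
  · intro h
    refine ⟨?_, ?_⟩
    · intro r hr
      refine h r ?_
      rw [Phi, hasUpRun_phi (by omega)]
      exact Or.inl ⟨hr.symm, by omega⟩
    · intro α hα r hrun
      refine h r ?_
      rw [Phi, hasUpRun_phi (by omega)]
      exact Or.inr ⟨α, hα, hrun⟩
  · rintro ⟨hall, hent⟩ r hrun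
    rw [Phi, hasUpRun_phi (by omega)] at hrun
    rcases hrun with ⟨h1, _⟩ | ⟨α, hα, h⟩
    · exact hall r h1.symm
    · exact hent α hα r h

def SSet (n : ℕ) : Set (List Bool) := {p | p.length = 2 * n ∧ IsDyck p ∧ Avoid A B p}

def DSet (k m : ℕ) : Set (List (List Bool)) :=
  {l | l.length = k ∧ (∀ α ∈ l, IsDyck α ∧ Avoid A B α) ∧ (l.map List.length).sum = 2 * m}

lemma SSet_finite (n : ℕ) : (SSet A B n).Finite :=
  (List.finite_length_eq Bool (2*n)).subset (fun p hp => hp.1)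

lemma DSet_finite (k m : ℕ) : (DSet A B k m).Finite := by
  apply Set.Finite.of_finite_image (f := compose)
  · apply (List.finite_length_eq Bool (k + 2*m)).subset
    rintro q ⟨l, hl, rfl⟩
    have := length_compose l
    simp only [Set.mem_setOf_eq]
    rw [this, hl.1, hl.2.2]
  · intro l hl l' hl' h
    exact compose_inj (fun α hα => (hl.2.1 α hα).1) (fun α hα => (hl'.2.1 α hα).1) h

def Sfin (n : ℕ) : Finset (List Bool) := (SSet_finite A B n).toFinset

def Dfin (k m : ℕ) : Finset (List (List Bool)) := (DSet_finite A B k m).toFinset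

lemma mem_Sfin {n : ℕ} {p : List Bool} :
    p ∈ Sfin A B n ↔ p.length = 2 * n ∧ IsDyck p ∧ Avoid A B p := by
  simp [Sfin, Set.Finite.mem_toFinset, SSet]

lemma mem_Dfin {k m : ℕ} {l : List (List Bool)} :
    l ∈ Dfin A B k m ↔ l.length = k ∧ (∀ α ∈ l, IsDyck α ∧ Avoid A B α) ∧
      (l.map List.length).sum = 2 * m := by
  simp [Dfin, Set.Finite.mem_toFinset, DSet]

lemma length_eq_counts (p : List Bool) : p.length = p.count true + p.count false := by
  induction p with
  | nil => simp
  | cons b q ih =>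
    rw [List.length_cons, List.count_cons, List.count_cons, ih]
    cases b <;> simp <;> omega

lemma isDyck_length_even {p : List Bool} (h : IsDyck p) : ∃ c, p.length = 2 * c := by
  have h2 := h.2
  unfold heightAt at h2
  rw [List.take_length] at h2
  have hcc : p.count true = p.count false := by exact_mod_cast sub_eq_zero.mp h2
  exact ⟨p.count true, by rw [length_eq_counts, hcc]; ring⟩

/-- counting recurrence for tuples -/
lemma Dfin_succ_card (k m : ℕ) :
    (Dfin A B (k+1) m).card
      = ∑ ab ∈ Finset.HasAntidiagonal.antidiagonal m, (Sfin A B ab.1).card * (Dfin A B k ab.2).card := by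
  have hset : Dfin A B (k+1) m = (Finset.HasAntidiagonal.antidiagonal m).biUnion
      (fun ab => ((Sfin A B ab.1) ×ˢ (Dfin A B k ab.2)).image (fun q => q.1 :: q.2)) := by
    ext l
    simp only [Finset.mem_biUnion, Finset.mem_image, Finset.mem_product, Finset.HasAntidiagonal.mem_antidiagonal,
      mem_Dfin, mem_Sfin, Prod.exists]
    constructor
    · rintro ⟨hlen, hent, hsum⟩
      cases l with
      | nil => simp at hlen
      | cons α t =>
        obtain ⟨c, hc⟩ := isDyck_length_even (hent α (by simp)).1
        have hts : (t.map List.length).sum = 2 * (m - c) ∧ c ≤ m := by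
          simp [hc] at hsum
          omega
        refine ⟨c, m - c, by omega, α, t, ⟨⟨hc, (hent α (by simp)).1, (hent α (by simp)).2⟩,
          ⟨by simpa using hlen, fun β hβ => hent β (by simp [hβ]), hts.1⟩⟩, rfl⟩
    · rintro ⟨a, b, hab, α, t, ⟨⟨hαl, hαd, hαa⟩, ⟨htl, hte, hts⟩⟩, rfl⟩
      refine ⟨by simpa using htl, ?_, ?_⟩
      · intro β hβ
        rcases List.mem_cons.mp hβ with rfl | hβ'
        · exact ⟨hαd, hαa⟩
        · exact hte β hβ'
      · simp [hαl, hts]; omega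
  rw [hset]
  rw [Finset.card_biUnion]
  · refine Finset.sum_congr rfl ?_
    rintro ⟨a, b⟩ hab
    rw [Finset.card_image_of_injOn, Finset.card_product]
    intro q hq q' hq' h
    have h1 : q.1 = q'.1 ∧ q.2 = q'.2 := by
      constructor
      · exact (List.cons.injEq _ _ _ _ ▸ h).1
      · exact (List.cons.injEq _ _ _ _ ▸ h).2
    exact Prod.ext h1.1 h1.2
  · rintro ⟨a, b⟩ hab ⟨a', b'⟩ hab' hne
    simp only [Finset.disjoint_left]
    intro l hl hl'
    simp only [Finset.mem_image, Finset.mem_product, Prod.exists] at hl hl'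
    obtain ⟨p, t, ⟨hp, ht⟩, rfl⟩ := hl
    obtain ⟨p', t', ⟨hp', ht'⟩, hcons⟩ := hl'
    have hpp : p' = p := (List.cons.injEq _ _ _ _ ▸ hcons).1
    rw [mem_Sfin] at hp hp'
    apply hne
    have ha : a = a' := by
      have := hp.1
      rw [← hpp, hp'.1] at this
      omega
    simp only [Finset.mem_coe, Finset.HasAntidiagonal.mem_antidiagonal] at hab hab'
    simp [Prod.ext_iff, ha]
    omega

/-- master bijection -/
lemma Sfin_card (hB : 1 ≤ B) (n : ℕ) :
    (Sfin A B n).card = ∑ k ∈ Finset.range (n+1),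
      if Allowed A B k then (Dfin A B k (n-k)).card else 0 := by
  have hset : Sfin A B n = (Finset.range (n+1)).biUnion
      (fun k => if Allowed A B k then (Dfin A B k (n-k)).image Phi else ∅) := by
    ext p
    simp only [Finset.mem_biUnion, Finset.mem_range, mem_Sfin]
    constructor
    · rintro ⟨hlen, hdyck, havd⟩
      obtain ⟨l, hl, hpeq⟩ := exists_decomp p.length p rfl hdyck
      have hpeq' : p = Phi l := hpeq
      subst hpeq'
      rw [avoid_phi A B hB] at havd
      have hplen : (Phi l).length = 2 * l.length + (l.map List.length).sum := by
        rw [Phi, List.length_append, List.length_replicate, length_compose]; omega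
      rw [hplen] at hlen
      have hkn : l.length ≤ n := by omega
      refine ⟨l.length, by omega, ?_⟩
      rw [if_pos havd.1, Finset.mem_image]
      refine ⟨l, ?_, rfl⟩
      rw [mem_Dfin]
      refine ⟨rfl, fun α hα => ⟨hl α hα, havd.2 α hα⟩, by omega⟩
    · rintro ⟨k, hk, hmem⟩
      by_cases hall : Allowed A B k
      · rw [if_pos hall, Finset.mem_image] at hmem
        obtain ⟨l, hl, rfl⟩ := hmem
        rw [mem_Dfin] at hl
        have hplen : (Phi l).length = 2 * l.length + (l.map List.length).sum := by
          rw [Phi, List.length_append, List.length_replicate, length_compose]; omega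
        refine ⟨?_, isDyck_phi l (fun α hα => (hl.2.1 α hα).1), ?_⟩
        · rw [hplen, hl.1, hl.2.2]; omega
        · rw [avoid_phi A B hB]
          exact ⟨hl.1 ▸ hall, fun α hα => (hl.2.1 α hα).2⟩
      · rw [if_neg hall] at hmem
        simp at hmem
  rw [hset, Finset.card_biUnion]
  · refine Finset.sum_congr rfl ?_
    intro k hk
    by_cases hall : Allowed A B k
    · rw [if_pos hall, if_pos hall]
      apply Finset.card_image_of_injOn
      intro l hl l' hl' h
      rw [Finset.mem_coe, mem_Dfin] at hl hl'
      exact phi_inj (fun α hα => (hl.2.1 α hα).1) (fun α hα => (hl'.2.1 α hα).1) h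
    · rw [if_neg hall, if_neg hall, Finset.card_empty]
  · intro k hk k' hk' hne
    simp only [Finset.disjoint_left]
    intro p hp hp'
    by_cases h1 : Allowed A B k
    · by_cases h2 : Allowed A B k'
      · rw [if_pos h1, Finset.mem_image] at hp
        rw [if_pos h2, Finset.mem_image] at hp'
        obtain ⟨l, hl, rfl⟩ := hp
        obtain ⟨l', hl', heq⟩ := hp'
        rw [mem_Dfin] at hl hl'
        have := phi_inj (fun α hα => (hl'.2.1 α hα).1) (fun α hα => (hl.2.1 α hα).1) heq
        apply hne
        rw [← hl.1, ← hl'.1, this]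
      · rw [if_neg h2] at hp'; simp at hp'
    · rw [if_neg h1] at hp; simp at hp


def GF : PowerSeries ℕ := genFun (fun p => ∀ r : ℕ, ¬ HasUpRun p (A * r + B))

lemma coeff_GF (n : ℕ) : PowerSeries.coeff n (GF A B) = (Sfin A B n).card := by
  rw [GF, genFun, PowerSeries.coeff_mk]
  have he : {p : List Bool | p.length = 2 * n ∧ IsDyck p ∧ ∀ r : ℕ, ¬ HasUpRun p (A * r + B)}
      = SSet A B n := rfl
  rw [he, Set.ncard_eq_toFinset_card _ (SSet_finite A B n)]
  rfl

lemma coeff_GF_pow (k : ℕ) :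
    ∀ m, PowerSeries.coeff m ((GF A B) ^ k) = (Dfin A B k m).card := by
  induction k with
  | zero =>
    intro m
    rw [pow_zero, PowerSeries.coeff_one]
    by_cases hm : m = 0
    · subst hm
      rw [if_pos rfl]
      have : Dfin A B 0 0 = {[]} := by
        ext l
        rw [mem_Dfin, Finset.mem_singleton]
        constructor
        · rintro ⟨hl, _, _⟩; exact List.length_eq_zero_iff.mp hl
        · rintro rfl; simp
      rw [this, Finset.card_singleton]
    · rw [if_neg hm]
      have : Dfin A B 0 m = ∅ := by
        ext l
        rw [mem_Dfin]
        simp only [Finset.notMem_empty, iff_false, not_and]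
        intro hl
        rw [List.length_eq_zero_iff.mp hl]
        simp
        omega
      rw [this, Finset.card_empty]
  | succ k ih =>
    intro m
    rw [pow_succ', PowerSeries.coeff_mul, Dfin_succ_card]
    refine Finset.sum_congr rfl ?_
    rintro ⟨a, b⟩ hab
    rw [coeff_GF, ih b]

lemma master (hB : 1 ≤ B) (n : ℕ) :
    PowerSeries.coeff n (GF A B) = ∑ k ∈ Finset.range (n+1),
      if Allowed A B k then PowerSeries.coeff (n-k) ((GF A B) ^ k) else 0 := by
  rw [coeff_GF, Sfin_card A B hB]
  refine Finset.sum_congr rfl fun k hk => ?_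
  rw [coeff_GF_pow]

lemma allowed_of_lt (hBA : B < A) {k : ℕ} (hk : k < A) : Allowed A B k ↔ k ≠ B := by
  constructor
  · intro h hkB
    exact h 0 (by omega)
  · intro h r hk2
    rcases Nat.eq_zero_or_pos r with rfl | hr
    · simp at hk2; omega
    · have : A ≤ A * r := Nat.le_mul_of_pos_right A hr
      omega

lemma allowed_add (hBA : B < A) (k : ℕ) : Allowed A B (A + k) ↔ Allowed A B k := by
  constructor
  · intro h r hk
    refine h (r + 1) ?_
    have : A * (r + 1) = A * r + A := by ring
    omega
  · intro h r hAk
    rcases Nat.eq_zero_or_pos r with rfl | hr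
    · simp at hAk; omega
    · obtain ⟨r', rfl⟩ : ∃ r', r = r' + 1 := ⟨r - 1, by omega⟩
      refine h r' ?_
      have : A * (r' + 1) = A * r' + A := by ring
      omega

lemma tail_eq (hB : 1 ≤ B) (hBA : B < A) (n : ℕ) :
    PowerSeries.coeff n (PowerSeries.X ^ A * (GF A B) ^ (A + 1))
      = ∑ k ∈ Finset.range (n+1), if A ≤ k ∧ Allowed A B k
          then PowerSeries.coeff (n-k) ((GF A B) ^ k) else 0 := by
  rw [PowerSeries.coeff_X_pow_mul']
  by_cases hAn : A ≤ n
  swap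
  · rw [if_neg hAn]
    symm
    refine Finset.sum_eq_zero fun k hk => ?_
    rw [if_neg]
    rintro ⟨h1, _⟩
    simp only [Finset.mem_range] at hk
    omega
  rw [if_pos hAn]
  set Q := GF A B with hQ
  set Qs : PowerSeries ℕ := ∑ j ∈ Finset.range (n - A + 1),
    if Allowed A B j then PowerSeries.X ^ j * Q ^ j else 0 with hQs
  have hcoeffQs : ∀ b, PowerSeries.coeff b Qs = ∑ j ∈ Finset.range (n - A + 1),
      if Allowed A B j then (if j ≤ b then PowerSeries.coeff (b-j) (Q ^ j) else 0) else 0 := by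
    intro b
    rw [hQs, map_sum]
    refine Finset.sum_congr rfl fun j hj => ?_
    rw [apply_ite (PowerSeries.coeff b), map_zero, PowerSeries.coeff_X_pow_mul']
  have hQm : ∀ b ≤ n - A, PowerSeries.coeff b Q = PowerSeries.coeff b Qs := by
    intro b hb
    rw [hcoeffQs, hQ, master A B hB b]
    have hv : ∀ j ∈ Finset.range (n - A + 1), j ∉ Finset.range (b+1) →
        (if Allowed A B j then (if j ≤ b then PowerSeries.coeff (b-j) (Q ^ j) else 0) else 0)
          = 0 := by
      intro j hj hjb
      simp only [Finset.mem_range] at hj hjb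
      rw [if_neg (by omega : ¬ j ≤ b), ite_self]
    rw [← Finset.sum_subset (Finset.range_subset_range.mpr (by omega : b + 1 ≤ n - A + 1)) hv]
    refine Finset.sum_congr rfl fun j hj => ?_
    simp only [Finset.mem_range] at hj
    rw [if_pos (by omega : j ≤ b), hQ]
  have step1 : PowerSeries.coeff (n - A) (Q ^ (A+1))
      = PowerSeries.coeff (n - A) (Q ^ A * Qs) := by
    rw [pow_succ, PowerSeries.coeff_mul, PowerSeries.coeff_mul]
    refine Finset.sum_congr rfl fun ab hab => ?_
    rw [Finset.HasAntidiagonal.mem_antidiagonal] at hab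
    rw [hQm ab.2 (by omega)]
  have step2 : PowerSeries.coeff (n - A) (Q ^ A * Qs) = ∑ j ∈ Finset.range (n - A + 1),
      if Allowed A B j then PowerSeries.coeff (n - A - j) (Q ^ (A + j)) else 0 := by
    rw [hQs, Finset.mul_sum, map_sum]
    refine Finset.sum_congr rfl fun j hj => ?_
    rw [mul_ite, mul_zero, apply_ite (PowerSeries.coeff (n - A)), map_zero]
    by_cases hal : Allowed A B j
    · rw [if_pos hal, if_pos hal]
      have hcomm : Q ^ A * (PowerSeries.X ^ j * Q ^ j) = PowerSeries.X ^ j * Q ^ (A + j) := by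
        rw [pow_add]; ring
      rw [hcomm, PowerSeries.coeff_X_pow_mul']
      simp only [Finset.mem_range] at hj
      rw [if_pos (by omega : j ≤ n - A)]
    · rw [if_neg hal, if_neg hal]
  have step3 : (∑ k ∈ Finset.range (n+1), if A ≤ k ∧ Allowed A B k
      then PowerSeries.coeff (n-k) (Q ^ k) else 0)
      = ∑ j ∈ Finset.range (n - A + 1),
        if Allowed A B j then PowerSeries.coeff (n - A - j) (Q ^ (A + j)) else 0 := by
    rw [← Finset.sum_filter_of_ne (p := fun k => A ≤ k)]
    · have hsets : (Finset.range (n+1)).filter (fun k => A ≤ k)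
          = (Finset.range (n - A + 1)).map ⟨fun j => A + j, add_right_injective A⟩ := by
        ext k
        simp only [Finset.mem_filter, Finset.mem_range, Finset.mem_map,
          Function.Embedding.coeFn_mk]
        constructor
        · rintro ⟨h1, h2⟩
          exact ⟨k - A, by omega, by omega⟩
        · rintro ⟨j, hj, rfl⟩
          omega
      rw [hsets, Finset.sum_map]
      refine Finset.sum_congr rfl fun j hj => ?_
      simp only [Function.Embedding.coeFn_mk]
      by_cases hal : Allowed A B j
      · rw [if_pos ⟨Nat.le_add_right A j, (allowed_add A B hBA j).mpr hal⟩, if_pos hal,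
          show n - (A + j) = n - A - j by omega]
      · rw [if_neg, if_neg hal]
        rintro ⟨_, h2⟩
        exact hal ((allowed_add A B hBA j).mp h2)
    · intro k hk hne
      by_contra hc
      apply hne
      rw [if_neg]
      tauto
  rw [step3, ← step2, ← step1]

lemma head_eq (n : ℕ) :
    PowerSeries.coeff n (∑ k ∈ (Finset.range A).erase B,
        PowerSeries.X ^ k * (GF A B) ^ k)
      = ∑ k ∈ Finset.range (n+1), if k < A ∧ k ≠ B
          then PowerSeries.coeff (n-k) ((GF A B) ^ k) else 0 := by
  rw [map_sum]
  have lhs : ∀ k, PowerSeries.coeff n (PowerSeries.X ^ k * (GF A B) ^ k)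
      = if k ≤ n then PowerSeries.coeff (n-k) ((GF A B) ^ k) else 0 :=
    fun k => PowerSeries.coeff_X_pow_mul' _ _ _
  calc ∑ k ∈ (Finset.range A).erase B,
        PowerSeries.coeff n (PowerSeries.X ^ k * (GF A B) ^ k)
      = ∑ k ∈ ((Finset.range A).erase B).filter (fun k => k ≤ n),
          PowerSeries.coeff (n-k) ((GF A B) ^ k) := by
        rw [Finset.sum_filter]
        exact Finset.sum_congr rfl fun k _ => lhs k
    _ = ∑ k ∈ (Finset.range (n+1)).filter (fun k => k < A ∧ k ≠ B),
          PowerSeries.coeff (n-k) ((GF A B) ^ k) := by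
        refine Finset.sum_congr ?_ fun _ _ => rfl
        ext k
        simp only [Finset.mem_filter, Finset.mem_erase, Finset.mem_range]
        omega
    _ = ∑ k ∈ Finset.range (n+1), if k < A ∧ k ≠ B
          then PowerSeries.coeff (n-k) ((GF A B) ^ k) else 0 := by
        rw [Finset.sum_filter]

lemma final (hB : 1 ≤ B) (hBA : B < A) :
    GF A B = (∑ k ∈ (Finset.range A).erase B, PowerSeries.X ^ k * (GF A B) ^ k) +
      PowerSeries.X ^ A * (GF A B) ^ (A + 1) := by
  ext n
  rw [map_add, head_eq, tail_eq A B hB hBA, master A B hB n, ← Finset.sum_add_distrib]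
  refine Finset.sum_congr rfl fun k hk => ?_
  by_cases hkA : k < A
  · rw [if_neg (by omega : ¬ (A ≤ k ∧ Allowed A B k)), add_zero]
    by_cases hkB : k = B
    · rw [if_neg, if_neg]
      · rintro ⟨_, h⟩; exact h hkB
      · rw [allowed_of_lt A B hBA hkA]; exact fun h => h hkB
    · rw [if_pos, if_pos ⟨hkA, hkB⟩]
      rw [allowed_of_lt A B hBA hkA]; exact hkB
  · rw [if_neg (by omega : ¬ (k < A ∧ k ≠ B)), zero_add]
    by_cases hal : Allowed A B k
    · rw [if_pos hal, if_pos ⟨by omega, hal⟩]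
    · rw [if_neg hal, if_neg (by tauto)]

end

end Stmt9

/-- For `1 ≤ B < A` and `P` the generating function of Dyck paths whose up-run lengths all
avoid `{A·r + B : r ≥ 0}`: `P = ∑_{0 ≤ k < A, k ≠ B} z^k P^k + z^A P^(A+1)`. -/
theorem stmt9 (A B : ℕ) (hB : 1 ≤ B) (hBA : B < A) :
    let P := genFun (fun p => ∀ r : ℕ, ¬ HasUpRun p (A * r + B))
    P = (∑ k ∈ (Finset.range A).erase B, PowerSeries.X ^ k * P ^ k) +
      PowerSeries.X ^ A * P ^ (A + 1) := by
  intro P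
  show Stmt9.GF A B = (∑ k ∈ (Finset.range A).erase B,
      PowerSeries.X ^ k * (Stmt9.GF A B) ^ k) +
    PowerSeries.X ^ A * (Stmt9.GF A B) ^ (A + 1)
  exact Stmt9.final A B hB hBA
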